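/- Let π be a group, N a normal subgroup of index 2^s such that the quotient π/N is an elementary abelian 2-group, and let π act ℂ-linearly on a complex vector space V via operators M_γ. Let {F_k} be the N-unipotent filtration of V. For a homomorphism ρ : π → ℤ/2ℤ vanishing on N, define the twisted variation operator Var^ρ_γ θ = M_γ θ − (−1)^{ρ(γ)} θ. Then for every k ≥ 0, an element θ ∈ V belongs to F_k if and only if θ admits a decomposition θ = Σ_ρ θ_ρ, the sum being over all 2^s homomorphisms ρ : π → ℤ/2ℤ vanishing on N, such that Var^ρ_γ θ_ρ ∈ F_{k−1} for all γ ∈ π and all such ρ. Moreover, if θ ∈ F_k, one can take θ_ρ = 2^{−s} Σ_{j=1}^{2^s} (−1)^{ρ(γ_j)} M_{γ_j} θ, where γ_1 = 1, γ_2, …, γ_{2^s} ∈ π are representatives of the 2^s cosets of N in π. -/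

import Mathlib

set_option linter.unusedTactic false
set_option linter.unnecessarySeqFocus false

private abbrev Rchar (π : Type*) [Group π] (N : Subgroup π) :=
  {ρ : π → ZMod 2 // (∀ a b : π, ρ (a * b) = ρ a + ρ b) ∧ ∀ γ ∈ N, ρ γ = 0}

private lemma char_congr
    {π : Type*} [Group π] {N : Subgroup π} (ρ : Rchar π N)
    {a b : π} (h : (a : π ⧸ N) = b) : ρ.1 a = ρ.1 b := by
  have hm : a⁻¹ * b ∈ N := QuotientGroup.eq.mp h
  have h2 : ρ.1 b = ρ.1 a + ρ.1 (a⁻¹ * b) := by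
    rw [← ρ.2.1]; congr 1; group
  rw [h2, ρ.2.2 _ hm, add_zero]

private lemma zsign_add (a b : ZMod 2) :
    ((-1 : ℂ)) ^ (a + b).val = (-1) ^ a.val * (-1) ^ b.val := by
  rw [ZMod.val_add, ← pow_add, ← neg_one_pow_eq_pow_mod_two]

private lemma zmod2_ne_zero (q : ZMod 2) (h : q ≠ 0) : q = 1 := by revert q; decide

private lemma char_setup
    {π : Type*} [Group π] (N : Subgroup π) (hN : N.Normal)
    (s : ℕ) (hindex : N.index = 2 ^ s) (hsq : ∀ γ : π, γ * γ ∈ N) :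
    Finite {ρ : π → ZMod 2 // (∀ a b : π, ρ (a * b) = ρ a + ρ b) ∧ ∀ γ ∈ N, ρ γ = 0} ∧
    Nat.card {ρ : π → ZMod 2 // (∀ a b : π, ρ (a * b) = ρ a + ρ b) ∧ ∀ γ ∈ N, ρ γ = 0}
      = 2 ^ s ∧
    ∀ γ : π, γ ∉ N →
      ∃ ρ : {ρ : π → ZMod 2 // (∀ a b : π, ρ (a * b) = ρ a + ρ b) ∧ ∀ γ ∈ N, ρ γ = 0},
        ρ.1 γ = 1 := by
  haveI := hN
  have hcardQ : Nat.card (π ⧸ N) = 2 ^ s := by rw [← Subgroup.index_eq_card]; exact hindex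
  haveI hfinQ : Finite (π ⧸ N) :=
    (Nat.card_ne_zero.mp (by rw [hcardQ]; positivity)).2
  have sq : ∀ x : π ⧸ N, x * x = 1 := by
    intro x
    induction x using QuotientGroup.induction_on with
    | _ g => rw [← QuotientGroup.mk_mul]; exact (QuotientGroup.eq_one_iff _).mpr (hsq g)
  letI : CommGroup (π ⧸ N) :=
    { (inferInstance : Group (π ⧸ N)) with
      mul_comm := by
        intro a b
        have inv : ∀ x : π ⧸ N, x⁻¹ = x := fun x => inv_eq_of_mul_eq_one_right (sq x)
        calc a * b = (a * b)⁻¹ := (inv _).symm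
          _ = b⁻¹ * a⁻¹ := mul_inv_rev _ _
          _ = b * a := by rw [inv, inv] }
  letI : Module (ZMod 2) (Additive (π ⧸ N)) := AddCommGroup.zmodModule (by
    intro x
    rw [two_smul]
    exact congrArg Additive.ofMul (sq x.toMul))
  set R := {ρ : π → ZMod 2 // (∀ a b : π, ρ (a * b) = ρ a + ρ b) ∧ ∀ γ ∈ N, ρ γ = 0}
    with hRdef
  -- forward map
  have memN_of : ∀ (ρ : R) (g : π), g ∈ N → ρ.1 g = 0 := fun ρ g hg => ρ.2.2 g hg
  let toDual : R → Module.Dual (ZMod 2) (Additive (π ⧸ N)) := fun ρ =>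
    { toFun := fun x => ρ.1 (Quotient.out x.toMul)
      map_add' := by
        intro x y
        have hxy : (((Quotient.out x.toMul * Quotient.out y.toMul : π)) : π ⧸ N)
            = ((Quotient.out ((x + y).toMul) : π) : π ⧸ N) := by
          rw [QuotientGroup.mk_mul, QuotientGroup.out_eq', QuotientGroup.out_eq',
            QuotientGroup.out_eq']
          rfl
        show ρ.1 (Quotient.out ((x + y).toMul))
            = ρ.1 (Quotient.out x.toMul) + ρ.1 (Quotient.out y.toMul)
        rw [← char_congr ρ hxy, ρ.2.1]
      map_smul' := by
        intro c x
        show ρ.1 (Quotient.out ((c • x).toMul)) = c • ρ.1 (Quotient.out x.toMul)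
        rcases (by revert c; decide : c = 0 ∨ c = 1) with hc | hc
        · subst hc
          rw [zero_smul, zero_smul]
          apply memN_of
          rw [← QuotientGroup.eq_one_iff, QuotientGroup.out_eq']
          rfl
        · subst hc; rw [one_smul, one_smul] }
  let ofDual : Module.Dual (ZMod 2) (Additive (π ⧸ N)) → R := fun φ =>
    ⟨fun γ => φ (Additive.ofMul ((γ : π ⧸ N))),
      by
        intro a b
        show φ (Additive.ofMul (((a * b : π) : π ⧸ N)))
            = φ (Additive.ofMul ((a : π ⧸ N))) + φ (Additive.ofMul ((b : π ⧸ N)))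
        rw [QuotientGroup.mk_mul, ofMul_mul, map_add],
      by
        intro γ hγ
        show φ (Additive.ofMul ((γ : π ⧸ N))) = 0
        have h1 : ((γ : π ⧸ N)) = 1 := (QuotientGroup.eq_one_iff γ).mpr hγ
        rw [h1, ofMul_one, map_zero]⟩
  have left : ∀ ρ, ofDual (toDual ρ) = ρ := by
    intro ρ
    apply Subtype.ext
    funext γ
    exact char_congr ρ (QuotientGroup.out_eq' _)
  have right : ∀ φ, toDual (ofDual φ) = φ := by
    intro φ
    apply LinearMap.ext
    intro x
    show φ (Additive.ofMul ((Quotient.out x.toMul : π) : π ⧸ N)) = φ x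
    rw [QuotientGroup.out_eq']
    rfl
  let e : R ≃ Module.Dual (ZMod 2) (Additive (π ⧸ N)) := ⟨toDual, ofDual, left, right⟩
  haveI hfinA : Finite (Additive (π ⧸ N)) := hfinQ
  haveI hfinD : Finite (Module.Dual (ZMod 2) (Additive (π ⧸ N))) :=
    Finite.of_injective (fun f => (f : Additive (π ⧸ N) → ZMod 2)) DFunLike.coe_injective
  haveI hfinR : Finite R := Finite.of_equiv _ e.symm
  have hcardA : Nat.card (Additive (π ⧸ N)) = 2 ^ s := hcardQ
  have hcardD : Nat.card (Module.Dual (ZMod 2) (Additive (π ⧸ N)))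
      = Nat.card (Additive (π ⧸ N)) := by
    have i1 : Fintype (Additive (π ⧸ N)) := Fintype.ofFinite _
    have i2 : Fintype (Module.Dual (ZMod 2) (Additive (π ⧸ N))) := Fintype.ofFinite _
    have h1 : Fintype.card (Additive (π ⧸ N))
        = Fintype.card (ZMod 2) ^ Module.finrank (ZMod 2) (Additive (π ⧸ N)) :=
      Module.card_eq_pow_finrank (K := ZMod 2)
    have h2 : Fintype.card (Module.Dual (ZMod 2) (Additive (π ⧸ N)))
        = Fintype.card (ZMod 2)
          ^ Module.finrank (ZMod 2) (Module.Dual (ZMod 2) (Additive (π ⧸ N))) :=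
      Module.card_eq_pow_finrank (K := ZMod 2)
    rw [Nat.card_eq_fintype_card, Nat.card_eq_fintype_card, h1, h2, Subspace.dual_finrank_eq]
  refine ⟨hfinR, ?_, ?_⟩
  · rw [Nat.card_congr e, hcardD, hcardA]
  · intro γ hγ
    have hx : (Additive.ofMul ((γ : π ⧸ N))) ≠ 0 := by
      intro h
      apply hγ
      rw [← QuotientGroup.eq_one_iff γ]
      exact h
    have : ¬ ∀ φ : Module.Dual (ZMod 2) (Additive (π ⧸ N)),
        φ (Additive.ofMul ((γ : π ⧸ N))) = 0 := by
      intro h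
      exact hx ((Module.forall_dual_apply_eq_zero_iff (ZMod 2) _).mp h)
    obtain ⟨φ, hφ⟩ := not_forall.mp this
    exact ⟨ofDual φ, zmod2_ne_zero _ hφ⟩

private lemma char_sum
    {π : Type*} [Group π] (N : Subgroup π) (s : ℕ)
    [Fintype (Rchar π N)]
    (hcard : Nat.card (Rchar π N) = 2 ^ s)
    (hsep : ∀ γ : π, γ ∉ N → ∃ ρ : Rchar π N, ρ.1 γ = 1) (g : π) :
    (g ∈ N → (∑ ρ : Rchar π N, ((-1 : ℂ)) ^ (ρ.1 g).val) = (2 : ℂ) ^ s) ∧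
    (g ∉ N → (∑ ρ : Rchar π N, ((-1 : ℂ)) ^ (ρ.1 g).val) = 0) := by
  constructor
  · intro hg
    have h1 : ∀ ρ : Rchar π N, ((-1 : ℂ)) ^ (ρ.1 g).val = 1 := by
      intro ρ
      rw [ρ.2.2 g hg]
      rfl
    rw [Finset.sum_congr rfl (fun ρ _ => h1 ρ), Finset.sum_const, nsmul_eq_mul, mul_one,
      Finset.card_univ, ← Nat.card_eq_fintype_card, hcard]
    push_cast
    ring
  · intro hg
    obtain ⟨ρ₀, hρ₀⟩ := hsep g hg
    let τ : Rchar π N → Rchar π N := fun ρ =>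
      ⟨fun x => ρ.1 x + ρ₀.1 x,
        by
          intro a b
          show ρ.1 (a * b) + ρ₀.1 (a * b) = (ρ.1 a + ρ₀.1 a) + (ρ.1 b + ρ₀.1 b)
          rw [ρ.2.1, ρ₀.2.1]; ring,
        by
          intro x hx
          show ρ.1 x + ρ₀.1 x = 0
          rw [ρ.2.2 x hx, ρ₀.2.2 x hx, add_zero]⟩
    have τinv : Function.Involutive τ := by
      intro ρ
      apply Subtype.ext
      funext x
      show ρ.1 x + ρ₀.1 x + ρ₀.1 x = ρ.1 x
      rw [add_assoc, CharTwo.add_self_eq_zero, add_zero]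
    have h2 : (∑ ρ : Rchar π N, ((-1 : ℂ)) ^ ((τ ρ).1 g).val)
        = ∑ ρ : Rchar π N, ((-1 : ℂ)) ^ (ρ.1 g).val :=
      Fintype.sum_bijective τ τinv.bijective _ _ (fun ρ => rfl)
    have h3 : ∀ ρ : Rchar π N, ((-1 : ℂ)) ^ ((τ ρ).1 g).val = -((-1 : ℂ)) ^ (ρ.1 g).val := by
      intro ρ
      show ((-1 : ℂ)) ^ ((ρ.1 g + ρ₀.1 g).val) = _
      rw [zsign_add, hρ₀]
      norm_num [ZMod.val_one]
    have h4 : -(∑ ρ : Rchar π N, ((-1 : ℂ)) ^ (ρ.1 g).val)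
        = ∑ ρ : Rchar π N, ((-1 : ℂ)) ^ (ρ.1 g).val := by
      conv_rhs => rw [← h2, Finset.sum_congr rfl (fun ρ _ => h3 ρ), Finset.sum_neg_distrib]
    have h5 : (2 : ℂ) * ∑ ρ : Rchar π N, ((-1 : ℂ)) ^ (ρ.1 g).val = 0 := by
      linear_combination -h4
    rcases mul_eq_zero.mp h5 with h | h
    · norm_num at h
    · exact h

/-- Invariance of the filtration under the whole group action. -/
private lemma F_invariant
    {π : Type*} [Group π] (N : Subgroup π) (hN : N.Normal)
    {V : Type*} [AddCommGroup V] [Module ℂ V]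
    (M : π →* (V →ₗ[ℂ] V))
    (F : ℤ → Submodule ℂ V)
    (hFneg : ∀ k : ℤ, k ≤ -1 → F k = ⊥)
    (hFdef : ∀ k : ℤ, 0 ≤ k → ∀ θ : V, θ ∈ F k ↔ ∀ γ ∈ N, M γ θ - θ ∈ F (k - 1)) :
    ∀ m : ℤ, ∀ γ : π, ∀ t ∈ F m, M γ t ∈ F m := by
  have aux : ∀ n : ℕ, ∀ m : ℤ, m ≤ (n : ℤ) - 1 → ∀ γ : π, ∀ t ∈ F m, M γ t ∈ F m := by
    intro n
    induction n with
    | zero =>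
      intro m hm γ t ht
      rw [hFneg m (by omega)] at ht ⊢
      simp only [Submodule.mem_bot] at ht ⊢
      rw [ht, map_zero]
    | succ n ih =>
      intro m hm γ t ht
      by_cases h0 : m ≤ (n : ℤ) - 1
      · exact ih m h0 γ t ht
      · have hm1 : m = n := by omega
        rw [hFdef m (by omega)]
        intro δ hδ
        have key : M δ (M γ t) - M γ t = M γ (M (γ⁻¹ * δ * γ) t - t) := by
          rw [map_sub]
          congr 1
          rw [← Module.End.mul_apply, ← map_mul, ← Module.End.mul_apply, ← map_mul]
          congr 1
          group
        rw [key]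
        apply ih (m - 1) (by omega)
        refine (hFdef m (by omega) t).mp ht _ ?_
        have := hN.conj_mem δ hδ γ⁻¹
        simpa using this
  intro m γ t ht
  exact aux (m + 1).toNat m (by omega) γ t ht

private lemma claimA
    {π : Type*} [Group π] (N : Subgroup π) (s : ℕ)
    [Fintype (Rchar π N)]
    {V : Type*} [AddCommGroup V] [Module ℂ V]
    (M : π →* (V →ₗ[ℂ] V)) (θ : V) (hN : N.Normal)
    (hsum1 : ∀ g ∈ N, (∑ ρ : Rchar π N, ((-1 : ℂ)) ^ (ρ.1 g).val) = (2 : ℂ) ^ s)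
    (hsum0 : ∀ g : π, g ∉ N → (∑ ρ : Rchar π N, ((-1 : ℂ)) ^ (ρ.1 g).val) = 0)
    (γrep : Fin (2 ^ s) → π) (hγ0 : γrep 0 = 1)
    (hbij : Function.Bijective (fun j : Fin (2 ^ s) => ((γrep j : π) : π ⧸ N))) :
    θ = ∑ ρ : Rchar π N, ((2 : ℂ) ^ s)⁻¹ •
      ∑ j : Fin (2 ^ s), ((-1 : ℂ) ^ (ρ.1 (γrep j)).val) • M (γrep j) θ := by
  haveI := hN
  have h2s : ((2 : ℂ) ^ s) ≠ 0 := pow_ne_zero s two_ne_zero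
  have step1 : ∑ ρ : Rchar π N, ((2 : ℂ) ^ s)⁻¹ •
      ∑ j : Fin (2 ^ s), ((-1 : ℂ) ^ (ρ.1 (γrep j)).val) • M (γrep j) θ
      = ((2 : ℂ) ^ s)⁻¹ • ∑ j : Fin (2 ^ s),
          (∑ ρ : Rchar π N, ((-1 : ℂ)) ^ (ρ.1 (γrep j)).val) • M (γrep j) θ := by
    conv_lhs => rw [← Finset.smul_sum]
    congr 1
    rw [Finset.sum_comm]
    refine Finset.sum_congr rfl fun j _ => ?_
    rw [Finset.sum_smul]
  rw [step1]
  have hjN : ∀ j : Fin (2 ^ s), γrep j ∈ N ↔ j = 0 := by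
    intro j
    constructor
    · intro hj
      apply hbij.1
      show ((γrep j : π) : π ⧸ N) = ((γrep 0 : π) : π ⧸ N)
      rw [hγ0]
      exact (QuotientGroup.eq_one_iff _).mpr hj
    · intro hj
      rw [hj, hγ0]
      exact N.one_mem
  have step2 : ∑ j : Fin (2 ^ s),
      (∑ ρ : Rchar π N, ((-1 : ℂ)) ^ (ρ.1 (γrep j)).val) • M (γrep j) θ
      = ((2 : ℂ) ^ s) • M (γrep 0) θ := by
    rw [Finset.sum_eq_single 0]
    · rw [hsum1 _ ((hjN 0).mpr rfl)]
    · intro j _ hj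
      rw [hsum0 _ (fun hmem => hj ((hjN j).mp hmem)), zero_smul]
    · intro h
      exact absurd (Finset.mem_univ 0) h
  rw [step2, hγ0, map_one, smul_smul, inv_mul_cancel₀ h2s, one_smul, Module.End.one_apply]

private lemma claimB
    {π : Type*} [Group π] (N : Subgroup π) (hN : N.Normal) (s : ℕ)
    {V : Type*} [AddCommGroup V] [Module ℂ V]
    (M : π →* (V →ₗ[ℂ] V))
    (T : Submodule ℂ V) (θ : V)
    (hmemN : ∀ g ∈ N, M g θ - θ ∈ T)
    (Finv : ∀ (γ : π) (t : V), t ∈ T → M γ t ∈ T)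
    (γrep : Fin (2 ^ s) → π)
    (hbij : Function.Bijective (fun j : Fin (2 ^ s) => ((γrep j : π) : π ⧸ N)))
    (ρ : Rchar π N) (γ : π) :
    M γ (((2 : ℂ) ^ s)⁻¹ •
        ∑ j : Fin (2 ^ s), ((-1 : ℂ) ^ (ρ.1 (γrep j)).val) • M (γrep j) θ)
      - ((-1 : ℂ) ^ (ρ.1 γ).val) • (((2 : ℂ) ^ s)⁻¹ •
        ∑ j : Fin (2 ^ s), ((-1 : ℂ) ^ (ρ.1 (γrep j)).val) • M (γrep j) θ) ∈ T := by
  haveI := hN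
  let e' : Fin (2 ^ s) ≃ π ⧸ N := Equiv.ofBijective _ hbij
  let σ : Fin (2 ^ s) ≃ Fin (2 ^ s) := (e'.trans (Equiv.mulLeft (γ : π ⧸ N))).trans e'.symm
  have hσ : ∀ j, ((γrep (σ j) : π) : π ⧸ N) = ((γ * γrep j : π) : π ⧸ N) := by
    intro j
    have h1 : e' (σ j) = (γ : π ⧸ N) * e' j := by
      show e'.toFun (e'.symm ((γ : π ⧸ N) * e'.toFun j)) = _
      exact e'.apply_symm_apply _
    rw [QuotientGroup.mk_mul]
    exact h1
  let nn : Fin (2 ^ s) → π := fun j => (γrep (σ j))⁻¹ * (γ * γrep j)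
  have hnn : ∀ j, nn j ∈ N := fun j => QuotientGroup.eq.mp (hσ j)
  have hsign : ∀ j, ((-1 : ℂ)) ^ (ρ.1 (γrep j)).val
      = ((-1 : ℂ)) ^ (ρ.1 γ).val * ((-1 : ℂ)) ^ (ρ.1 (γrep (σ j))).val := by
    intro j
    have h1 : ρ.1 (γrep (σ j)) = ρ.1 γ + ρ.1 (γrep j) := by
      rw [char_congr ρ (hσ j), ρ.2.1]
    rw [h1, zsign_add, ← mul_assoc, ← pow_add]
    rw [Even.neg_one_pow ⟨(ρ.1 γ).val, rfl⟩, one_mul]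
  -- the key algebraic identity
  have key : M γ (((2 : ℂ) ^ s)⁻¹ •
        ∑ j : Fin (2 ^ s), ((-1 : ℂ) ^ (ρ.1 (γrep j)).val) • M (γrep j) θ)
      - ((-1 : ℂ) ^ (ρ.1 γ).val) • (((2 : ℂ) ^ s)⁻¹ •
        ∑ j : Fin (2 ^ s), ((-1 : ℂ) ^ (ρ.1 (γrep j)).val) • M (γrep j) θ)
      = ((2 : ℂ) ^ s)⁻¹ • ∑ j : Fin (2 ^ s),
          ((-1 : ℂ) ^ (ρ.1 (γrep j)).val) • (M (γrep (σ j)) (M (nn j) θ - θ)) := by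
    have lhs1 : M γ (((2 : ℂ) ^ s)⁻¹ •
        ∑ j : Fin (2 ^ s), ((-1 : ℂ) ^ (ρ.1 (γrep j)).val) • M (γrep j) θ)
        = ((2 : ℂ) ^ s)⁻¹ •
          ∑ j : Fin (2 ^ s), ((-1 : ℂ) ^ (ρ.1 (γrep j)).val) • M (γ * γrep j) θ := by
      rw [map_smul, map_sum]
      congr 1
      refine Finset.sum_congr rfl fun j _ => ?_
      rw [map_smul]
      congr 1
      rw [← Module.End.mul_apply, ← map_mul]
    have lhs2 : ((-1 : ℂ) ^ (ρ.1 γ).val) • (((2 : ℂ) ^ s)⁻¹ •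
        ∑ j : Fin (2 ^ s), ((-1 : ℂ) ^ (ρ.1 (γrep j)).val) • M (γrep j) θ)
        = ((2 : ℂ) ^ s)⁻¹ •
          ∑ j : Fin (2 ^ s), ((-1 : ℂ) ^ (ρ.1 (γrep j)).val) • M (γrep (σ j)) θ := by
      rw [smul_comm]
      congr 1
      rw [Finset.smul_sum]
      have := Equiv.sum_comp σ
        (fun j => ((-1 : ℂ) ^ (ρ.1 γ).val) • (((-1 : ℂ) ^ (ρ.1 (γrep j)).val) • M (γrep j) θ))
      rw [← this]
      refine Finset.sum_congr rfl fun j _ => ?_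
      rw [smul_smul, ← hsign j]
    rw [lhs1, lhs2, ← smul_sub, ← Finset.sum_sub_distrib]
    congr 1
    refine Finset.sum_congr rfl fun j _ => ?_
    rw [← smul_sub]
    congr 1
    rw [map_sub]
    congr 1
    rw [← Module.End.mul_apply, ← map_mul]
    congr 2
    show γ * γrep j = γrep (σ j) * ((γrep (σ j))⁻¹ * (γ * γrep j))
    group
  rw [key]
  refine Submodule.smul_mem _ _ (Submodule.sum_mem _ fun j _ => ?_)
  exact Submodule.smul_mem _ _ (Finv _ _ (hmemN _ (hnn j)))

theorem unipotent_filtration_twisted_decomposition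
    {π : Type*} [Group π] (N : Subgroup π) (hN : N.Normal)
    (s : ℕ) (hindex : N.index = 2 ^ s)
    (hsq : ∀ γ : π, γ * γ ∈ N)
    {V : Type*} [AddCommGroup V] [Module ℂ V]
    (M : π →* (V →ₗ[ℂ] V))
    (F : ℤ → Submodule ℂ V)
    (hFneg : ∀ k : ℤ, k ≤ -1 → F k = ⊥)
    (hFdef : ∀ k : ℤ, 0 ≤ k → ∀ θ : V, θ ∈ F k ↔ ∀ γ ∈ N, M γ θ - θ ∈ F (k - 1))
    (k : ℤ) (hk : 0 ≤ k) (θ : V) :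
    (θ ∈ F k ↔
      ∃ Θ : {ρ : π → ZMod 2 //
              (∀ a b : π, ρ (a * b) = ρ a + ρ b) ∧ ∀ γ ∈ N, ρ γ = 0} → V,
        θ = ∑ᶠ ρ, Θ ρ ∧
        ∀ ρ, ∀ γ : π,
          M γ (Θ ρ) - ((-1 : ℂ) ^ (ρ.1 γ).val) • Θ ρ ∈ F (k - 1)) ∧
    (θ ∈ F k →
      ∀ γrep : Fin (2 ^ s) → π, γrep 0 = 1 →
        Function.Bijective (fun j : Fin (2 ^ s) => ((γrep j : π) : π ⧸ N)) →
        let Θ₀ : {ρ : π → ZMod 2 //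
              (∀ a b : π, ρ (a * b) = ρ a + ρ b) ∧ ∀ γ ∈ N, ρ γ = 0} → V :=
          fun ρ => ((2 : ℂ) ^ s)⁻¹ •
            ∑ j : Fin (2 ^ s), ((-1 : ℂ) ^ (ρ.1 (γrep j)).val) • M (γrep j) θ
        θ = ∑ᶠ ρ, Θ₀ ρ ∧
        ∀ ρ, ∀ γ : π,
          M γ (Θ₀ ρ) - ((-1 : ℂ) ^ (ρ.1 γ).val) • Θ₀ ρ ∈ F (k - 1)) := by
  haveI := hN
  obtain ⟨hfinR, hcardR, hsep⟩ := char_setup N hN s hindex hsq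
  haveI := hfinR
  letI : Fintype (Rchar π N) := Fintype.ofFinite _
  have hsum1 : ∀ g ∈ N, (∑ ρ : Rchar π N, ((-1 : ℂ)) ^ (ρ.1 g).val) = (2 : ℂ) ^ s :=
    fun g hg => (char_sum N s hcardR hsep g).1 hg
  have hsum0 : ∀ g : π, g ∉ N → (∑ ρ : Rchar π N, ((-1 : ℂ)) ^ (ρ.1 g).val) = 0 :=
    fun g hg => (char_sum N s hcardR hsep g).2 hg
  have Finv := F_invariant N hN M F hFneg hFdef
  -- the main construction
  have main2 : θ ∈ F k →
      ∀ γrep : Fin (2 ^ s) → π, γrep 0 = 1 →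
        Function.Bijective (fun j : Fin (2 ^ s) => ((γrep j : π) : π ⧸ N)) →
        (θ = ∑ᶠ ρ : Rchar π N, ((2 : ℂ) ^ s)⁻¹ •
            ∑ j : Fin (2 ^ s), ((-1 : ℂ) ^ (ρ.1 (γrep j)).val) • M (γrep j) θ) ∧
        ∀ ρ : Rchar π N, ∀ γ : π,
          M γ (((2 : ℂ) ^ s)⁻¹ •
              ∑ j : Fin (2 ^ s), ((-1 : ℂ) ^ (ρ.1 (γrep j)).val) • M (γrep j) θ)
            - ((-1 : ℂ) ^ (ρ.1 γ).val) • (((2 : ℂ) ^ s)⁻¹ •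
              ∑ j : Fin (2 ^ s), ((-1 : ℂ) ^ (ρ.1 (γrep j)).val) • M (γrep j) θ)
            ∈ F (k - 1) := by
    intro hθ γrep hγ0 hbij
    constructor
    · rw [finsum_eq_sum_of_fintype]
      exact claimA N s M θ hN hsum1 hsum0 γrep hγ0 hbij
    · intro ρ γ
      exact claimB N hN s M (F (k - 1)) θ
        (fun g hg => (hFdef k hk θ).mp hθ g hg)
        (fun γ' t ht => Finv (k - 1) γ' t ht) γrep hbij ρ γ
  constructor
  · constructor
    · -- forward: construct the coset representatives
      intro hθ
      have hcardQ : Nat.card (π ⧸ N) = 2 ^ s := by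
        rw [← Subgroup.index_eq_card]; exact hindex
      haveI hfinQ : Finite (π ⧸ N) :=
        (Nat.card_ne_zero.mp (by rw [hcardQ]; exact (pow_pos two_pos s).ne')).2
      haveI : Fintype (π ⧸ N) := Fintype.ofFinite _
      have hcQ : Fintype.card (π ⧸ N) = 2 ^ s := by
        rw [← Nat.card_eq_fintype_card]; exact hcardQ
      haveI : DecidableEq (π ⧸ N) := Classical.decEq _
      let e0 : Fin (2 ^ s) ≃ π ⧸ N := (Fintype.equivFinOfCardEq hcQ).symm
      let e : Fin (2 ^ s) ≃ π ⧸ N := e0.trans (Equiv.swap (e0 0) 1)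
      have he0 : e 0 = 1 := by
        show Equiv.swap (e0 0) 1 (e0 0) = 1
        exact Equiv.swap_apply_left _ _
      let γrep : Fin (2 ^ s) → π := fun j => if j = 0 then 1 else Quotient.out (e j)
      have h1 : γrep 0 = 1 := if_pos rfl
      have hquot : (fun j : Fin (2 ^ s) => ((γrep j : π) : π ⧸ N)) = e := by
        funext j
        by_cases h : j = 0
        · subst h
          show ((γrep 0 : π) : π ⧸ N) = e 0
          rw [h1, he0]
          rfl
        · show ((γrep j : π) : π ⧸ N) = e j
          have : γrep j = Quotient.out (e j) := if_neg h
          rw [this, QuotientGroup.out_eq']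
      have hbij : Function.Bijective (fun j : Fin (2 ^ s) => ((γrep j : π) : π ⧸ N)) := by
        rw [hquot]; exact e.bijective
      obtain ⟨hA, hB⟩ := main2 hθ γrep h1 hbij
      exact ⟨_, hA, hB⟩
    · -- backward
      rintro ⟨Θ, hΘsum, hΘvar⟩
      rw [hFdef k hk]
      intro γ hγmem
      have hsum : θ = ∑ ρ : Rchar π N, Θ ρ := by
        rw [hΘsum, finsum_eq_sum_of_fintype]
      rw [hsum, map_sum, ← Finset.sum_sub_distrib]
      refine Submodule.sum_mem _ fun ρ _ => ?_
      have h := hΘvar ρ γ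
      rw [ρ.2.2 γ hγmem] at h
      simpa using h
  · intro hθ γrep h1 hbij
    exact main2 hθ γrep h1 hbij
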